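/- Let ω > 0, K ≥ 1, and let u(t) = a_0/2 + Σ_{k=1}^{K} (a_k cos(kωt) + b_k sin(kωt)) and v(t) = a'_0/2 + Σ_{k=1}^{K} (a'_k cos(kωt) + b'_k sin(kωt)) be trigonometric polynomials whose amplitude vectors H_u = (a_1, b_1, …, a_K, b_K) and H_v = (a'_1, b'_1, …, a'_K, b'_K) are both nonzero. Suppose there exists c > 0 such that a'_k = c·a_k and b'_k = c·b_k for all 1 ≤ k ≤ K (i.e., H_u and H_v have the same direction), and suppose inf of the range of u equals inf of the range of v and sup of the range of u equals sup of the range of v (i.e., u and v have the same span). Then u(t) = v(t) for all t ∈ ℝ. -/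

import Mathlib

open Real

/-- (Paper's Theorem 5, essential content.) Let `ω > 0`, `K ≥ 1` and let
`u(t) = a_0/2 + Σ_{k=1}^{K} (a_k cos(kωt) + b_k sin(kωt))` and
`v(t) = a'_0/2 + Σ_{k=1}^{K} (a'_k cos(kωt) + b'_k sin(kωt))` be trigonometric
polynomials with nonzero amplitude vectors. If the amplitude vectors have the
same direction (there is `c > 0` with `a'_k = c * a_k`, `b'_k = c * b_k` for
all `1 ≤ k ≤ K`) and `u` and `v` have the same span (equal infima and equal
suprema of their ranges), then `u = v`. -/
theorem trig_poly_eq_of_direction_eq_of_span_eq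
    (ω : ℝ) (hω : 0 < ω) (K : ℕ) (hK : 1 ≤ K)
    (a b a' b' : ℕ → ℝ) (u v : ℝ → ℝ)
    (hu : ∀ t : ℝ, u t = a 0 / 2 +
      ∑ k ∈ Finset.Icc 1 K, (a k * Real.cos (k * ω * t) + b k * Real.sin (k * ω * t)))
    (hv : ∀ t : ℝ, v t = a' 0 / 2 +
      ∑ k ∈ Finset.Icc 1 K, (a' k * Real.cos (k * ω * t) + b' k * Real.sin (k * ω * t)))
    (hHu : ∃ k ∈ Finset.Icc 1 K, a k ≠ 0 ∨ b k ≠ 0)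
    (hHv : ∃ k ∈ Finset.Icc 1 K, a' k ≠ 0 ∨ b' k ≠ 0)
    (hdir : ∃ c : ℝ, 0 < c ∧ ∀ k ∈ Finset.Icc 1 K, a' k = c * a k ∧ b' k = c * b k)
    (hinf : sInf (Set.range u) = sInf (Set.range v))
    (hsup : sSup (Set.range u) = sSup (Set.range v)) :
    ∀ t : ℝ, u t = v t := by
  obtain ⟨c, hc, hcab⟩ := hdir
  set d : ℝ := a' 0 / 2 - c * (a 0 / 2) with hd
  -- v = c • u + d
  have hvu : ∀ t, v t = c * u t + d := by
    intro t
    rw [hv t, hu t]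
    have : ∑ k ∈ Finset.Icc 1 K,
        (a' k * Real.cos (k * ω * t) + b' k * Real.sin (k * ω * t))
        = c * ∑ k ∈ Finset.Icc 1 K,
        (a k * Real.cos (k * ω * t) + b k * Real.sin (k * ω * t)) := by
      rw [Finset.mul_sum]
      refine Finset.sum_congr rfl fun k hk => ?_
      obtain ⟨h1, h2⟩ := hcab k hk
      rw [h1, h2]; ring
    rw [this]; ring
  -- boundedness of u
  set M : ℝ := |a 0 / 2| + ∑ k ∈ Finset.Icc 1 K, (|a k| + |b k|) with hM
  have hbound : ∀ t, |u t| ≤ M := by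
    intro t
    rw [hu t, hM]
    refine (abs_add_le _ _).trans (add_le_add_right ?_ _)
    refine (Finset.abs_sum_le_sum_abs _ _).trans (Finset.sum_le_sum fun k _ => ?_)
    refine (abs_add_le _ _).trans (add_le_add ?_ ?_)
    · rw [abs_mul]
      calc |a k| * |Real.cos (k * ω * t)| ≤ |a k| * 1 :=
        mul_le_mul_of_nonneg_left (abs_cos_le_one _) (abs_nonneg _)
      _ = |a k| := mul_one _
    · rw [abs_mul]
      calc |b k| * |Real.sin (k * ω * t)| ≤ |b k| * 1 :=
        mul_le_mul_of_nonneg_left (abs_sin_le_one _) (abs_nonneg _)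
      _ = |b k| := mul_one _
  have hne : (Set.range u).Nonempty := ⟨u 0, 0, rfl⟩
  have hbdda : BddAbove (Set.range u) := ⟨M, by rintro x ⟨t, rfl⟩; exact (abs_le.mp (hbound t)).2⟩
  have hbddb : BddBelow (Set.range u) := ⟨-M, by rintro x ⟨t, rfl⟩; exact (abs_le.mp (hbound t)).1⟩
  -- sup/inf of v in terms of u
  have hmono : Monotone (fun x : ℝ => c * x + d) := fun x y hxy => by
    dsimp; nlinarith
  have hcont : Continuous (fun x : ℝ => c * x + d) := by continuity
  have hrangev : Set.range v = (fun x : ℝ => c * x + d) '' Set.range u := by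
    ext x
    constructor
    · rintro ⟨t, rfl⟩; exact ⟨u t, ⟨t, rfl⟩, (hvu t).symm⟩
    · rintro ⟨y, ⟨t, rfl⟩, rfl⟩; exact ⟨t, hvu t⟩
  set S := sSup (Set.range u)
  set I := sInf (Set.range u)
  have hS : c * S + d = S := by
    have := Monotone.map_csSup_of_continuousAt (f := fun x : ℝ => c * x + d)
      (hcont.continuousAt) hmono hne hbdda
    calc c * S + d = sSup ((fun x : ℝ => c * x + d) '' Set.range u) := this
    _ = sSup (Set.range v) := by rw [hrangev]
    _ = S := hsup.symm
  have hI : c * I + d = I := by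
    have := Monotone.map_csInf_of_continuousAt (f := fun x : ℝ => c * x + d)
      (hcont.continuousAt) hmono hne hbddb
    calc c * I + d = sInf ((fun x : ℝ => c * x + d) '' Set.range u) := this
    _ = sInf (Set.range v) := by rw [hrangev]
    _ = I := hinf.symm
  intro t
  by_cases hc1 : c = 1
  · have hd0 : d = 0 := by rw [hc1] at hS; linarith
    rw [hvu t, hc1, hd0]; ring
  · -- then S = I and u, v are constant
    have hSI : S = I := by
      rcases lt_trichotomy c 1 with h | h | h
      · nlinarith [le_csSup hbdda (⟨t, rfl⟩ : u t ∈ Set.range u),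
          csInf_le hbddb (⟨t, rfl⟩ : u t ∈ Set.range u)]
      · exact absurd h hc1
      · nlinarith [le_csSup hbdda (⟨t, rfl⟩ : u t ∈ Set.range u),
          csInf_le hbddb (⟨t, rfl⟩ : u t ∈ Set.range u)]
    have hut : u t = S := le_antisymm
      (le_csSup hbdda ⟨t, rfl⟩) (hSI ▸ csInf_le hbddb ⟨t, rfl⟩)
    rw [hvu t, hut]
    have : c * S + d = S := hS
    linarith [hS, hI, hSI ▸ hI]
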